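/- Given points x_1,…,x_N in ℝ^n (not all equal) and σ > 0, let W_{ij} = exp(−‖x_i − x_j‖_2²/(2σ)), D_{ii} = Σ_{k=1}^N W_{ik}, and A = D^{−1/2} W D^{−1/2}. Let Φ be an m×n real matrix, define W̃_{ij} = exp(−‖Φx_i − Φx_j‖_2²/(2σ)), D̃_{ii} = Σ_{k=1}^N W̃_{ik} and à = D̃^{−1/2} W̃ D̃^{−1/2}. Fix 0 < ε < 1, set C = max_{i,j} ‖x_i − x_j‖_2²/(2σ) and δ = ε/(4C). If (1 − δ)·‖x_i − x_j‖_2² ≤ ‖Φx_i − Φx_j‖_2² ≤ (1 + δ)·‖x_i − x_j‖_2² for all i,j (which holds in particular when each x_i is s-sparse and Φ satisfies the restricted isometry property of order 2s with constant δ), then |Ã_{ij} − A_{ij}| ≤ ε for all i,j. -/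

import Mathlib

open Matrix

/-- Euclidean norm of a vector in `ℝ^d`. -/
noncomputable def eucNorm {d : ℕ} (v : Fin d → ℝ) : ℝ :=
  Real.sqrt (∑ j, v j ^ 2)

/-- Gaussian kernel matrix `W_{ij} = exp(−‖x_i − x_j‖²/(2σ))`. -/
noncomputable def gaussW {N n : ℕ} (x : Fin N → Fin n → ℝ) (σ : ℝ) :
    Matrix (Fin N) (Fin N) ℝ :=
  fun i j => Real.exp (-(eucNorm (x i - x j) ^ 2) / (2 * σ))

/-- Degree `D_{ii} = Σ_k W_{ik}` of row `i`. -/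
noncomputable def degW {N : ℕ} (W : Matrix (Fin N) (Fin N) ℝ) (i : Fin N) : ℝ :=
  ∑ l, W i l

/-- Normalized affinity matrix `A = D^{−1/2} W D^{−1/2}`. -/
noncomputable def normAff {N : ℕ} (W : Matrix (Fin N) (Fin N) ℝ) :
    Matrix (Fin N) (Fin N) ℝ :=
  fun i j => W i j / Real.sqrt (degW W i * degW W j)

lemma eucNorm_sq_pos {d : ℕ} {v : Fin d → ℝ} (hv : v ≠ 0) : 0 < eucNorm v ^ 2 := by
  have hs : 0 < ∑ j, v j ^ 2 := by
    obtain ⟨k, hk⟩ : ∃ k, v k ≠ 0 := by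
      by_contra h
      push_neg at h
      exact hv (funext h)
    exact Finset.sum_pos' (fun j _ => sq_nonneg _)
      ⟨k, Finset.mem_univ k, by positivity⟩
  have : 0 < eucNorm v := Real.sqrt_pos.mpr hs
  positivity

lemma eucNorm_sub_comm {d : ℕ} (u v : Fin d → ℝ) : eucNorm (u - v) = eucNorm (v - u) := by
  unfold eucNorm
  congr 1
  apply Finset.sum_congr rfl
  intro k _
  simp only [Pi.sub_apply]
  ring

lemma exp_half_le {ε : ℝ} (h0 : 0 < ε) (h1 : ε < 1) : Real.exp (ε / 2) ≤ 1 + ε := by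
  have h2 : 1 - ε / 2 ≤ Real.exp (-(ε / 2)) := by
    have := Real.add_one_le_exp (-(ε / 2)); linarith
  have h3 : Real.exp (-(ε / 2)) * Real.exp (ε / 2) = 1 := by
    rw [← Real.exp_add]; simp
  have h4 : 0 < Real.exp (ε / 2) := Real.exp_pos _
  nlinarith

theorem affinity_entrywise_perturbation_compressed_sensing {N n m : ℕ}
    (x : Fin N → Fin n → ℝ) (Φ : Matrix (Fin m) (Fin n) ℝ) (σ ε : ℝ)
    (hσ : 0 < σ) (hε0 : 0 < ε) (hε1 : ε < 1)
    (hx : ∃ i j, x i ≠ x j)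
    (C δ : ℝ)
    (hC : C = ⨆ a : Fin N, ⨆ b : Fin N, eucNorm (x a - x b) ^ 2 / (2 * σ))
    (hδ : δ = ε / (4 * C))
    (hRIP : ∀ i j,
      (1 - δ) * eucNorm (x i - x j) ^ 2 ≤ eucNorm (Φ.mulVec (x i) - Φ.mulVec (x j)) ^ 2 ∧
      eucNorm (Φ.mulVec (x i) - Φ.mulVec (x j)) ^ 2 ≤ (1 + δ) * eucNorm (x i - x j) ^ 2) :
    ∀ i j,
      |normAff (gaussW (fun a => Φ.mulVec (x a)) σ) i j - normAff (gaussW x σ) i j| ≤ ε := by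
  obtain ⟨a0, b0, hab⟩ := hx
  haveI : Nonempty (Fin N) := ⟨a0⟩
  have h2σ : (0:ℝ) < 2 * σ := by positivity
  set d : Fin N → Fin N → ℝ := fun a b => eucNorm (x a - x b) ^ 2 with hd
  set d' : Fin N → Fin N → ℝ :=
    fun a b => eucNorm (Φ.mulVec (x a) - Φ.mulVec (x b)) ^ 2 with hd'
  have hd0 : ∀ a b, 0 ≤ d a b := fun a b => sq_nonneg _
  have hd'0 : ∀ a b, 0 ≤ d' a b := fun a b => sq_nonneg _
  have hRIP1 : ∀ a b, (1 - δ) * d a b ≤ d' a b := fun a b => (hRIP a b).1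
  have hRIP2 : ∀ a b, d' a b ≤ (1 + δ) * d a b := fun a b => (hRIP a b).2
  -- C bounds
  have hCle : ∀ a b, d a b / (2 * σ) ≤ C := by
    intro a b
    rw [hC]
    have h1 : d a b / (2 * σ) ≤ ⨆ b', eucNorm (x a - x b') ^ 2 / (2 * σ) :=
      le_ciSup (f := fun b' => eucNorm (x a - x b') ^ 2 / (2 * σ))
        (Set.Finite.bddAbove (Set.finite_range _)) b
    exact h1.trans
      (le_ciSup (f := fun a' => ⨆ b', eucNorm (x a' - x b') ^ 2 / (2 * σ))
        (Set.Finite.bddAbove (Set.finite_range _)) a)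
  have hC0 : 0 < C := by
    have h1 : 0 < d a0 b0 := eucNorm_sq_pos (sub_ne_zero.mpr hab)
    have h2 : 0 < d a0 b0 / (2 * σ) := by positivity
    exact h2.trans_le (hCle a0 b0)
  have hδ0 : 0 < δ := by rw [hδ]; positivity
  have hδC : ∀ a b, δ * (d a b / (2 * σ)) ≤ ε / 4 := by
    intro a b
    have h1 := hCle a b
    have h2 : δ * (d a b / (2 * σ)) ≤ δ * C :=
      mul_le_mul_of_nonneg_left h1 hδ0.le
    have h3 : δ * C = ε / 4 := by
      rw [hδ]; field_simp
    linarith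
  -- entrywise W bounds
  set W : Matrix (Fin N) (Fin N) ℝ := gaussW x σ with hW
  set W' : Matrix (Fin N) (Fin N) ℝ := gaussW (fun a => Φ.mulVec (x a)) σ with hW'
  have hWdef : ∀ a b, W a b = Real.exp (-(d a b) / (2 * σ)) := fun a b => rfl
  have hW'def : ∀ a b, W' a b = Real.exp (-(d' a b) / (2 * σ)) := fun a b => rfl
  have hWpos : ∀ a b, 0 < W a b := fun a b => Real.exp_pos _
  have hW'pos : ∀ a b, 0 < W' a b := fun a b => Real.exp_pos _
  have hWub : ∀ a b, W' a b ≤ Real.exp (ε / 4) * W a b := by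
    intro a b
    rw [hWdef, hW'def, ← Real.exp_add]
    apply Real.exp_le_exp.mpr
    have h5 : (d a b - d' a b) / (2 * σ) ≤ (δ * d a b) / (2 * σ) := by
      gcongr
      linarith [hRIP1 a b]
    have h6 : (δ * d a b) / (2 * σ) = δ * (d a b / (2 * σ)) := mul_div_assoc _ _ _
    have key : (d a b - d' a b) / (2 * σ) ≤ ε / 4 := by
      rw [h6] at h5; linarith [hδC a b]
    have e1 : -(d' a b) / (2 * σ) = -(d' a b / (2 * σ)) := neg_div _ _
    have e2 : -(d a b) / (2 * σ) = -(d a b / (2 * σ)) := neg_div _ _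
    have e3 : (d a b - d' a b) / (2 * σ) = d a b / (2 * σ) - d' a b / (2 * σ) :=
      sub_div _ _ _
    linarith
  have hWlb : ∀ a b, Real.exp (-(ε / 4)) * W a b ≤ W' a b := by
    intro a b
    rw [hWdef, hW'def, ← Real.exp_add]
    apply Real.exp_le_exp.mpr
    have h5 : (d' a b - d a b) / (2 * σ) ≤ (δ * d a b) / (2 * σ) := by
      gcongr
      linarith [hRIP2 a b]
    have h6 : (δ * d a b) / (2 * σ) = δ * (d a b / (2 * σ)) := mul_div_assoc _ _ _
    have key : (d' a b - d a b) / (2 * σ) ≤ ε / 4 := by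
      rw [h6] at h5; linarith [hδC a b]
    have e1 : -(d' a b) / (2 * σ) = -(d' a b / (2 * σ)) := neg_div _ _
    have e2 : -(d a b) / (2 * σ) = -(d a b / (2 * σ)) := neg_div _ _
    have e3 : (d' a b - d a b) / (2 * σ) = d' a b / (2 * σ) - d a b / (2 * σ) :=
      sub_div _ _ _
    linarith
  -- degree bounds
  set D : Fin N → ℝ := degW W with hD
  set D' : Fin N → ℝ := degW W' with hD'
  have hDpos : ∀ i, 0 < D i := fun i =>
    Finset.sum_pos (fun l _ => hWpos i l) Finset.univ_nonempty
  have hD'pos : ∀ i, 0 < D' i := fun i =>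
    Finset.sum_pos (fun l _ => hW'pos i l) Finset.univ_nonempty
  have hDub : ∀ i, D' i ≤ Real.exp (ε / 4) * D i := by
    intro i
    rw [hD', hD, degW, degW, Finset.mul_sum]
    exact Finset.sum_le_sum (fun l _ => hWub i l)
  have hDlb : ∀ i, Real.exp (-(ε / 4)) * D i ≤ D' i := by
    intro i
    rw [hD', hD, degW, degW, Finset.mul_sum]
    exact Finset.sum_le_sum (fun l _ => hWlb i l)
  intro i j
  set S : ℝ := Real.sqrt (D i * D j) with hS
  set S' : ℝ := Real.sqrt (D' i * D' j) with hS'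
  have hSpos : 0 < S := Real.sqrt_pos.mpr (mul_pos (hDpos i) (hDpos j))
  have hS'pos : 0 < S' := Real.sqrt_pos.mpr (mul_pos (hD'pos i) (hD'pos j))
  have hSsq : S ^ 2 = D i * D j := Real.sq_sqrt (mul_pos (hDpos i) (hDpos j)).le
  have hSub : S' ≤ Real.exp (ε / 4) * S := by
    have hm : D' i * D' j ≤ (Real.exp (ε / 4) * D i) * (Real.exp (ε / 4) * D j) :=
      mul_le_mul (hDub i) (hDub j) (hD'pos j).le
        (mul_nonneg (Real.exp_pos _).le (hDpos i).le)
    have h1 : D' i * D' j ≤ (Real.exp (ε / 4) * S) ^ 2 := by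
      rw [mul_pow, hSsq]; nlinarith [hm]
    calc S' ≤ Real.sqrt ((Real.exp (ε / 4) * S) ^ 2) := Real.sqrt_le_sqrt h1
    _ = Real.exp (ε / 4) * S :=
      Real.sqrt_sq (mul_nonneg (Real.exp_pos _).le hSpos.le)
  have hSlb : Real.exp (-(ε / 4)) * S ≤ S' := by
    have hm : (Real.exp (-(ε / 4)) * D i) * (Real.exp (-(ε / 4)) * D j)
        ≤ D' i * D' j :=
      mul_le_mul (hDlb i) (hDlb j)
        (mul_nonneg (Real.exp_pos _).le (hDpos j).le) (hD'pos i).le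
    have h1 : (Real.exp (-(ε / 4)) * S) ^ 2 ≤ D' i * D' j := by
      rw [mul_pow, hSsq]; nlinarith [hm]
    calc Real.exp (-(ε / 4)) * S = Real.sqrt ((Real.exp (-(ε / 4)) * S) ^ 2) :=
      (Real.sqrt_sq (mul_nonneg (Real.exp_pos _).le hSpos.le)).symm
    _ ≤ S' := Real.sqrt_le_sqrt h1
  -- affinity bounds
  set A : ℝ := normAff W i j with hA
  set A' : ℝ := normAff W' i j with hA'
  have hAdef : A = W i j / S := rfl
  have hA'def : A' = W' i j / S' := rfl
  have hApos : 0 < A := by rw [hAdef]; exact div_pos (hWpos i j) hSpos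
  have hAle1 : A ≤ 1 := by
    rw [hAdef, div_le_one hSpos]
    have h1 : W i j ≤ D i := by
      rw [hD, degW]
      exact Finset.single_le_sum (fun l _ => (hWpos i l).le) (Finset.mem_univ j)
    have h2 : W i j ≤ D j := by
      have hsym : W i j = W j i := by
        rw [hWdef, hWdef]
        simp only [hd, eucNorm_sub_comm (x i) (x j)]
      rw [hsym, hD, degW]
      exact Finset.single_le_sum (fun l _ => (hWpos j l).le) (Finset.mem_univ i)
    have h3 : W i j ^ 2 ≤ D i * D j := by nlinarith [hWpos i j]
    have h4 : W i j = Real.sqrt (W i j ^ 2) := (Real.sqrt_sq (hWpos i j).le).symm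
    rw [h4, hS]
    exact Real.sqrt_le_sqrt h3
  have hAub : A' ≤ Real.exp (ε / 2) * A := by
    have h1 : A' ≤ Real.exp (ε / 4) * W i j / (Real.exp (-(ε / 4)) * S) := by
      rw [hA'def]
      exact div_le_div₀ (mul_nonneg (Real.exp_pos _).le (hWpos i j).le)
        (hWub i j) (mul_pos (Real.exp_pos _) hSpos) hSlb
    have h2 : Real.exp (ε / 4) * W i j / (Real.exp (-(ε / 4)) * S)
        = Real.exp (ε / 2) * A := by
      have he : Real.exp (ε / 4) * Real.exp (ε / 4) = Real.exp (ε / 2) := by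
        rw [← Real.exp_add]; congr 1; ring
      have hSne : S ≠ 0 := hSpos.ne'
      rw [hAdef, Real.exp_neg, ← he]
      field_simp
    linarith
  have hAlb : Real.exp (-(ε / 2)) * A ≤ A' := by
    have h1 : Real.exp (-(ε / 4)) * W i j / (Real.exp (ε / 4) * S) ≤ A' := by
      rw [hA'def]
      exact div_le_div₀ (hW'pos i j).le (hWlb i j) hS'pos hSub
    have h2 : Real.exp (-(ε / 4)) * W i j / (Real.exp (ε / 4) * S)
        = Real.exp (-(ε / 2)) * A := by
      have he : Real.exp (ε / 4) * Real.exp (ε / 4) = Real.exp (ε / 2) := by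
        rw [← Real.exp_add]; congr 1; ring
      have hSne : S ≠ 0 := hSpos.ne'
      rw [hAdef, Real.exp_neg, Real.exp_neg, ← he]
      have hWne : W i j ≠ 0 := (hWpos i j).ne'
      field_simp
    linarith
  -- conclude
  have hexpub : Real.exp (ε / 2) ≤ 1 + ε := exp_half_le hε0 hε1
  have hexplb : 1 - ε / 2 ≤ Real.exp (-(ε / 2)) := by
    have := Real.add_one_le_exp (-(ε / 2)); linarith
  have u1 : A' ≤ (1 + ε) * A :=
    hAub.trans (mul_le_mul_of_nonneg_right hexpub hApos.le)
  have u2 : (1 + ε) * A = A + ε * A := by ring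
  have u3 : ε * A ≤ ε := mul_le_of_le_one_right hε0.le hAle1
  have l1 : (1 - ε / 2) * A ≤ A' :=
    (mul_le_mul_of_nonneg_right hexplb hApos.le).trans hAlb
  have l2 : (1 - ε / 2) * A = A - (ε / 2) * A := by ring
  have l3 : (ε / 2) * A ≤ ε / 2 := mul_le_of_le_one_right (by positivity) hAle1
  rw [abs_le]
  constructor
  · linarith
  · linarith
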